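/- Let G be a finite connected simple undirected graph on n ≥ 2 vertices and let κ(G) denote its vertex connectivity, i.e., the minimum number of vertices whose removal disconnects G or leaves a single vertex. Then the diameter of G satisfies diam(G) ≤ ⌊(n − 2)/κ(G)⌋ + 1. -/

import Mathlib

open SimpleGraph

/-- The vertex connectivity of `G`: the minimum number of vertices whose removal results in
either a disconnected graph or a trivial (single-vertex) graph. -/
noncomputable def vertexConnectivity {V : Type*} [Fintype V] (G : SimpleGraph V) : ℕ :=
  sInf {n : ℕ | ∃ S : Finset V, S.card = n ∧
    (¬ (G.induce ((S : Set V))ᶜ).Connected ∨ Nat.card ((S : Set V)ᶜ : Set V) = 1)}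

lemma walk_ivt {V : Type*} {G : SimpleGraph V} (hconn : G.Connected) (u : V) (i : ℕ) :
    ∀ {a b : V} (p : G.Walk a b), G.dist u a ≤ i → i ≤ G.dist u b →
      ∃ w ∈ p.support, G.dist u w = i := by
  intro a b p
  induction p with
  | nil => exact fun h1 h2 => ⟨_, by simp, le_antisymm h1 h2⟩
  | @cons a c b h q ih =>
    intro h1 h2
    by_cases hi : G.dist u a = i
    · exact ⟨a, by simp, hi⟩
    · have hac : G.dist a c = 1 := (SimpleGraph.dist_eq_one_iff_adj).mpr h
      have h1' : G.dist u c ≤ i := by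
        have := hconn.dist_triangle (u := u) (v := a) (w := c)
        omega
      obtain ⟨w, hw, hwd⟩ := ih h1' h2
      exact ⟨w, by simp [hw], hwd⟩

theorem stmt0 {V : Type*} [Fintype V] (G : SimpleGraph V)
    (hconn : G.Connected) (hn : 2 ≤ Fintype.card V) :
    G.diam ≤ (Fintype.card V - 2) / vertexConnectivity G + 1 := by
  classical
  have hne : Nonempty V := Fintype.card_pos_iff.mp (by omega)
  obtain ⟨u, v, huv⟩ := G.exists_dist_eq_diam
  set d := G.diam with hdd
  by_cases hd : d ≤ 1
  · exact hd.trans (Nat.le_add_left 1 _)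
  push_neg at hd
  set N : ℕ → Finset V := fun i => Finset.univ.filter (fun w => G.dist u w = i) with hN
  have hmem : ∀ i, 0 < i → i < d → (N i).card ∈ {n : ℕ | ∃ S : Finset V, S.card = n ∧
      (¬ (G.induce ((S : Set V))ᶜ).Connected ∨ Nat.card ((S : Set V)ᶜ : Set V) = 1)} := by
    intro i hi hid
    refine ⟨N i, rfl, Or.inl ?_⟩
    intro hc
    have hu : u ∈ (↑(N i) : Set V)ᶜ := by
      simp only [hN, Set.mem_compl_iff, Finset.coe_filter, Set.mem_setOf_eq,
        Finset.mem_univ, true_and]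
      rw [SimpleGraph.dist_self]; omega
    have hv : v ∈ (↑(N i) : Set V)ᶜ := by
      simp only [hN, Set.mem_compl_iff, Finset.coe_filter, Set.mem_setOf_eq,
        Finset.mem_univ, true_and]
      omega
    obtain ⟨p⟩ := hc.preconnected ⟨u, hu⟩ ⟨v, hv⟩
    obtain ⟨w, hw, hwd⟩ := walk_ivt hconn u i
      (p.map (SimpleGraph.Embedding.induce ((↑(N i) : Set V)ᶜ)).toHom)
      (by show G.dist u u ≤ i; rw [SimpleGraph.dist_self]; omega)
      (by show i ≤ G.dist u v; rw [huv]; omega)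
    rw [SimpleGraph.Walk.support_map, List.mem_map] at hw
    obtain ⟨x, _, hx⟩ := hw
    have hxmem : (x : V) ∈ (↑(N i) : Set V)ᶜ := x.2
    apply hxmem
    simp only [hN, Finset.coe_filter, Set.mem_setOf_eq, Finset.mem_univ, true_and]
    rw [show (x : V) = w from hx]
    exact hwd
  have hκ : ∀ i, 0 < i → i < d → vertexConnectivity G ≤ (N i).card :=
    fun i hi hid => Nat.sInf_le (hmem i hi hid)
  have hκpos : 0 < vertexConnectivity G := by
    rcases Nat.eq_zero_or_pos (vertexConnectivity G) with h0 | h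
    · exfalso
      have hne' : {n : ℕ | ∃ S : Finset V, S.card = n ∧
          (¬ (G.induce ((S : Set V))ᶜ).Connected ∨ Nat.card ((S : Set V)ᶜ : Set V) = 1)}.Nonempty :=
        ⟨_, hmem 1 one_pos (by omega)⟩
      have h0mem := Nat.sInf_mem hne'
      rw [vertexConnectivity] at h0
      rw [h0] at h0mem
      obtain ⟨S, hS0, hS⟩ := h0mem
      rw [Finset.card_eq_zero] at hS0
      subst hS0
      have hrw : ((↑(∅ : Finset V) : Set V))ᶜ = Set.univ := by simp
      rw [hrw] at hS
      rcases hS with hS | hS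
      · exact hS ((G.induceUnivIso).connected_iff.mpr hconn)
      · rw [Nat.card_eq_fintype_card] at hS
        have : Fintype.card (Set.univ : Set V) = Fintype.card V := Fintype.card_congr
          (Equiv.Set.univ V)
        omega
    · exact h
  -- counting
  have hdisj : ((Finset.range (d + 1) : Finset ℕ) : Set ℕ).PairwiseDisjoint N := by
    intro i _ j _ hij
    simp only [Finset.disjoint_left, hN, Finset.mem_filter]
    rintro w ⟨-, hwi⟩ ⟨-, hwj⟩
    exact hij (hwi.symm.trans hwj)
  have hsum : ∑ i ∈ Finset.range (d + 1), (N i).card ≤ Fintype.card V := by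
    rw [← Finset.card_biUnion (fun i hi j hj hij => hdisj hi hj hij)]
    exact Finset.card_le_univ _
  have hsub : insert 0 (insert d (Finset.Ioo 0 d)) ⊆ Finset.range (d + 1) := by
    intro x hx
    simp only [Finset.mem_insert, Finset.mem_Ioo] at hx
    simp only [Finset.mem_range]
    omega
  have hsplit : ∑ i ∈ insert 0 (insert d (Finset.Ioo 0 d)), (N i).card ≤
      ∑ i ∈ Finset.range (d + 1), (N i).card :=
    Finset.sum_le_sum_of_subset hsub
  rw [Finset.sum_insert (by simp only [Finset.mem_insert, Finset.mem_Ioo]; omega),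
    Finset.sum_insert (by simp)] at hsplit
  have hN0 : 1 ≤ (N 0).card := by
    refine Finset.card_pos.mpr ⟨u, ?_⟩
    simp [hN, SimpleGraph.dist_self]
  have hNd : 1 ≤ (N d).card := by
    refine Finset.card_pos.mpr ⟨v, ?_⟩
    simp [hN, huv]
  have hIoo : (Finset.Ioo 0 d).card * vertexConnectivity G ≤
      ∑ i ∈ Finset.Ioo 0 d, (N i).card := by
    calc (Finset.Ioo 0 d).card * vertexConnectivity G
        = ∑ _i ∈ Finset.Ioo 0 d, vertexConnectivity G := by rw [Finset.sum_const, smul_eq_mul]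
      _ ≤ ∑ i ∈ Finset.Ioo 0 d, (N i).card := Finset.sum_le_sum (fun i hi => by
          rw [Finset.mem_Ioo] at hi; exact hκ i hi.1 hi.2)
  rw [Nat.card_Ioo, Nat.sub_zero] at hIoo
  have hcount : 2 + (d - 1) * vertexConnectivity G ≤ Fintype.card V := by omega
  have hdiv : d - 1 ≤ (Fintype.card V - 2) / vertexConnectivity G :=
    (Nat.le_div_iff_mul_le hκpos).mpr (by omega)
  omega
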